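/- Let f : ℝ^N → ℝ be differentiable and L-smooth with L > 0, let x* be a global minimizer of f, let x^0 ∈ ℝ^N with ξ(x^0) := f(x^0) − f(x*) > 0, and let (x^k)_{k≥0} be the gradient descent iterates x^{k+1} := x^k − (1/L)·∇f(x^k). Let ε > 0 and let K be a positive integer with K ≥ (L·ξ(x^0)/ε)·log(ξ(x^0)/ε). Then at least one of the following holds: (i) (1/2)·‖∇f(x^k)‖² ≤ ε for some k ∈ {0,…,K−1}; or (ii) f(x^K) − f(x*) ≤ ε. -/

import Mathlib

open scoped RealInnerProductSpace

/-- **Theorem 6.20 instantiated for gradient descent in the smooth case.**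
If `f` is `L`-smooth with global minimizer `x*`, the gradient descent iterates satisfy:
for `K ≥ (L·ξ(x⁰)/ε)·log(ξ(x⁰)/ε)`, either `(1/2)‖∇f(x^k)‖² ≤ ε` for some `k < K`,
or `f(x^K) − f(x*) ≤ ε`. -/
theorem stmt_19 (N : ℕ) (f : EuclideanSpace ℝ (Fin N) → ℝ) (L : ℝ) (hL : 0 < L)
    (hdiff : Differentiable ℝ f)
    (hsmooth : ∀ x h : EuclideanSpace ℝ (Fin N),
      f (x + h) ≤ f x + ⟪gradient f x, h⟫ + L / 2 * ‖h‖ ^ 2)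
    (xstar : EuclideanSpace ℝ (Fin N)) (hmin : ∀ y, f xstar ≤ f y)
    (x : ℕ → EuclideanSpace ℝ (Fin N))
    (hiter : ∀ t, x (t + 1) = x t - (1 / L) • gradient f (x t))
    (hgap : f xstar < f (x 0))
    (ε : ℝ) (hε : 0 < ε) (K : ℕ) (hK : 0 < K)
    (hKbig : L * (f (x 0) - f xstar) / ε * Real.log ((f (x 0) - f xstar) / ε) ≤ (K : ℝ)) :
    (∃ k < K, (1 / 2) * ‖gradient f (x k)‖ ^ 2 ≤ ε) ∨ f (x K) - f xstar ≤ ε := by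
  by_contra hcon
  push_neg at hcon
  obtain ⟨h1, h2⟩ := hcon
  -- descent lemma
  have step : ∀ t, f (x (t + 1)) ≤ f (x t) - 1 / (2 * L) * ‖gradient f (x t)‖ ^ 2 := by
    intro t
    have h := hsmooth (x t) (-((1 / L) • gradient f (x t)))
    have heq : x t + -((1 / L) • gradient f (x t)) = x (t + 1) := by
      rw [hiter t, sub_eq_add_neg]
    rw [heq] at h
    have hin : ⟪gradient f (x t), -((1 / L) • gradient f (x t))⟫
        = -(1 / L) * ‖gradient f (x t)‖ ^ 2 := by
      rw [inner_neg_right, real_inner_smul_right, real_inner_self_eq_norm_sq]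
      ring
    have hnorm : ‖-((1 / L) • gradient f (x t))‖ ^ 2
        = (1 / L) ^ 2 * ‖gradient f (x t)‖ ^ 2 := by
      rw [norm_neg, norm_smul, mul_pow, Real.norm_eq_abs, sq_abs]
    rw [hin, hnorm] at h
    have hL' : L ≠ 0 := ne_of_gt hL
    calc f (x (t + 1)) ≤ f (x t) + -(1 / L) * ‖gradient f (x t)‖ ^ 2
          + L / 2 * ((1 / L) ^ 2 * ‖gradient f (x t)‖ ^ 2) := h
      _ = f (x t) - 1 / (2 * L) * ‖gradient f (x t)‖ ^ 2 := by field_simp; ring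
  set δ := f (x 0) - f xstar with hδ
  -- decrease by at least ε/L per step while gradient large
  have decr : ∀ t ≤ K, f (x t) - f xstar ≤ δ - t * (ε / L) := by
    intro t
    induction t with
    | zero => intro _; simp; linarith
    | succ n ih =>
      intro hn
      have hnK : n < K := Nat.lt_of_succ_le hn
      have ih' := ih (le_of_lt hnK)
      have hg := h1 n hnK
      have := step n
      have hbound : ε / L ≤ 1 / (2 * L) * ‖gradient f (x n)‖ ^ 2 := by
        rw [div_le_iff₀ hL]
        have heq : 1 / (2 * L) * ‖gradient f (x n)‖ ^ 2 * L
            = 1 / 2 * ‖gradient f (x n)‖ ^ 2 := by field_simp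
        rw [heq]; linarith
      push_cast
      linarith
  have hdK := decr K le_rfl
  -- ε < f (x K) - f xstar ≤ δ - K ε / L
  have hδε : ε < δ := by
    have : f (x K) - f xstar ≤ δ := by
      have := decr K le_rfl
      have hKε : 0 ≤ (K : ℝ) * (ε / L) := by positivity
      linarith
    linarith
  have hδpos : 0 < δ := lt_trans hε hδε
  -- log inequality: log(δ/ε) ≥ 1 - ε/δ
  have hlog : Real.log (ε / δ) ≤ ε / δ - 1 :=
    Real.log_le_sub_one_of_pos (by positivity)
  have hlog2 : 1 - ε / δ ≤ Real.log (δ / ε) := by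
    have : Real.log (δ / ε) = -Real.log (ε / δ) := by
      rw [← Real.log_inv, inv_div]
    rw [this]; linarith
  -- from hKbig: δ - ε ≤ K * ε / L
  have hkey : δ - ε ≤ (K : ℝ) * (ε / L) := by
    have hmul : L * δ / ε * (1 - ε / δ) ≤ L * δ / ε * Real.log (δ / ε) := by
      apply mul_le_mul_of_nonneg_left hlog2 (by positivity)
    have h3 : L * δ / ε * (1 - ε / δ) = L * (δ - ε) / ε := by
      field_simp
    have h4 : L * (δ - ε) / ε ≤ (K : ℝ) := by
      rw [← h3]; exact le_trans hmul (by rw [hδ] at hKbig ⊢; exact hKbig)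
    rw [div_le_iff₀ hε] at h4
    rw [← sub_nonneg]
    have : ((K : ℝ) * (ε / L) - (δ - ε)) * L ≥ 0 := by
      field_simp
      nlinarith
    nlinarith
  linarith
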